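/- Nontermination Is Sequential (standard semantics): for a program P, there exists a value v with P ⇓ v if and only if there is no infinite call chain P = e₀ → e₁ → e₂ → … . -/

import Mathlib

/- Untyped λ-expressions. -/
inductive Exp : Type
  | var : String → Exp
  | app : Exp → Exp → Exp
  | lam : String → Exp → Exp
deriving DecidableEq

namespace Exp

/-- Free variables. -/
def fv : Exp → Finset String
  | var x => {x}
  | app e1 e2 => fv e1 ∪ fv e2
  | lam x e => fv e \ {x}

/-- Substitution e[v/x].  (For closed `v`, as in CBV evaluation of programs,
this is capture-avoiding.) -/
def subst (v : Exp) (x : String) : Exp → Exp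
  | var y => if y = x then v else var y
  | app e1 e2 => app (subst v x e1) (subst v x e2)
  | lam y e => if y = x then lam y e else lam y (subst v x e)

/-- A (standard) value is an abstraction. -/
def IsValue : Exp → Prop
  | lam _ _ => True
  | _ => False

end Exp

/-- Call-by-value evaluation `e ⇓ v` (standard, substitution-based semantics). -/
inductive EvalS : Exp → Exp → Prop
  | value (x : String) (e : Exp) : EvalS (Exp.lam x e) (Exp.lam x e)
  | apply {e1 e2 : Exp} {x : String} {e0 v2 v : Exp} :
      EvalS e1 (Exp.lam x e0) → EvalS e2 v2 → EvalS (Exp.subst v2 x e0) v →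
      EvalS (Exp.app e1 e2) v

/-- The "calls" relation `e → e'` on closed λ-expressions. -/
inductive CallS : Exp → Exp → Prop
  | oper (e1 e2 : Exp) : CallS (Exp.app e1 e2) e1
  | opnd {e1 v1 : Exp} (e2 : Exp) : EvalS e1 v1 → CallS (Exp.app e1 e2) e2
  | call {e1 e2 : Exp} {x : String} {e0 v2 : Exp} :
      EvalS e1 (Exp.lam x e0) → EvalS e2 v2 →
      CallS (Exp.app e1 e2) (Exp.subst v2 x e0)

lemma evalS_isValue {e v : Exp} (h : EvalS e v) : Exp.IsValue v := by
  induction h with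
  | value => trivial
  | apply _ _ _ _ _ ih3 => exact ih3

lemma evalS_det {e v : Exp} (h : EvalS e v) : ∀ {v'}, EvalS e v' → v = v' := by
  induction h with
  | value => intro v' h'; cases h'; rfl
  | apply h1 h2 h3 ih1 ih2 ih3 =>
    intro v' h'
    cases h' with
    | apply h1' h2' h3' =>
      have e1 := ih1 h1'
      injection e1 with hx he0
      subst hx; subst he0
      have e2 := ih2 h2'
      subst e2
      exact ih3 h3'

lemma fv_subst (v : Exp) (x : String) (e : Exp) :
    (Exp.subst v x e).fv ⊆ (e.fv \ {x}) ∪ v.fv := by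
  induction e with
  | var y =>
    simp only [Exp.subst]
    by_cases h : y = x
    · simp [h, Exp.fv]
    · simp [h, Exp.fv]
  | app e1 e2 ih1 ih2 =>
    intro a ha
    simp only [Exp.subst, Exp.fv, Finset.mem_union] at ha
    simp only [Exp.fv, Finset.mem_union, Finset.mem_sdiff, Finset.mem_singleton]
    rcases ha with h | h
    · have := ih1 h
      simp only [Finset.mem_union, Finset.mem_sdiff, Finset.mem_singleton] at this
      tauto
    · have := ih2 h
      simp only [Finset.mem_union, Finset.mem_sdiff, Finset.mem_singleton] at this
      tauto
  | lam y e ih =>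
    by_cases h : y = x
    · intro a ha
      simp only [Exp.subst, h, if_pos rfl, ↓reduceIte, Exp.fv, Finset.mem_sdiff,
        Finset.mem_singleton] at ha
      subst h
      simp only [Exp.fv, Finset.mem_union, Finset.mem_sdiff, Finset.mem_singleton]
      tauto
    · intro a ha
      simp only [Exp.subst, if_neg h, Exp.fv, Finset.mem_sdiff,
        Finset.mem_singleton] at ha
      have := ih ha.1
      simp only [Finset.mem_union, Finset.mem_sdiff, Finset.mem_singleton] at this
      simp only [Exp.fv, Finset.mem_union, Finset.mem_sdiff, Finset.mem_singleton]
      tauto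

lemma evalS_closed {e v : Exp} (h : EvalS e v) : e.fv = ∅ → v.fv = ∅ := by
  induction h with
  | value => exact id
  | apply h1 h2 h3 ih1 ih2 ih3 =>
    intro he
    rename_i e1 e2 x e0 v2 v
    have he' : e1.fv = ∅ ∧ e2.fv = ∅ := by
      simpa [Exp.fv, Finset.union_eq_empty] using he
    have hl : e0.fv \ {x} = ∅ := ih1 he'.1
    have hv2 : v2.fv = ∅ := ih2 he'.2
    apply ih3
    have hs := fv_subst v2 x e0
    rw [hl, hv2] at hs
    simpa using Finset.subset_empty.mp (by simpa using hs)

lemma evalS_acc {e v : Exp} (h : EvalS e v) : Acc (fun a b => CallS b a) e := by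
  induction h with
  | value x e =>
    constructor; intro y hy; cases hy
  | apply h1 h2 h3 ih1 ih2 ih3 =>
    constructor; intro y hy
    cases hy with
    | oper => exact ih1
    | opnd _ _ => exact ih2
    | call hl hr =>
      have e1 := evalS_det h1 hl
      injection e1 with hx he0
      subst hx; subst he0
      have e2 := evalS_det h2 hr
      subst e2
      exact ih3

lemma acc_no_chain {α : Type*} {r : α → α → Prop} {x : α} (h : Acc r x) :
    ∀ f : ℕ → α, f 0 = x → ¬ ∀ n, r (f (n + 1)) (f n) := by
  induction h with
  | intro x hx ih =>
    intro f hf0 hf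
    exact ih (f 1) (hf0 ▸ hf 0) (fun n => f (n + 1)) rfl (fun n => hf (n + 1))

lemma progress {e : Exp} (he : e.fv = ∅) (hne : ¬ ∃ v, EvalS e v) :
    ∃ e', CallS e e' ∧ e'.fv = ∅ ∧ ¬ ∃ v, EvalS e' v := by
  cases e with
  | var x => simp [Exp.fv] at he
  | lam x e => exact absurd ⟨_, EvalS.value x e⟩ hne
  | app e1 e2 =>
    have hfv : e1.fv = ∅ ∧ e2.fv = ∅ := by
      simpa [Exp.fv, Finset.union_eq_empty] using he
    by_cases h1 : ∃ v, EvalS e1 v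
    · obtain ⟨v1, hv1⟩ := h1
      obtain ⟨x, e0, rfl⟩ : ∃ x e0, v1 = Exp.lam x e0 := by
        have hval := evalS_isValue hv1
        cases v1 with
        | var _ => exact absurd hval (by simp [Exp.IsValue])
        | app _ _ => exact absurd hval (by simp [Exp.IsValue])
        | lam a b => exact ⟨a, b, rfl⟩
      by_cases h2 : ∃ v, EvalS e2 v
      · obtain ⟨v2, hv2⟩ := h2
        refine ⟨Exp.subst v2 x e0, CallS.call hv1 hv2, ?_, ?_⟩
        · have hl : e0.fv \ {x} = ∅ := evalS_closed hv1 hfv.1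
          have hv2c : v2.fv = ∅ := evalS_closed hv2 hfv.2
          have hs := fv_subst v2 x e0
          rw [hl, hv2c] at hs
          simpa using Finset.subset_empty.mp (by simpa using hs)
        · rintro ⟨v, hv⟩
          exact hne ⟨v, EvalS.apply hv1 hv2 hv⟩
      · exact ⟨e2, CallS.opnd e2 hv1, hfv.2, h2⟩
    · exact ⟨e1, CallS.oper e1 e2, hfv.1, h1⟩

/-- NIS (Nontermination Is Sequential), standard semantics: a program `P`
evaluates to some value iff there is no infinite call chain starting at `P`. -/
theorem nontermination_is_sequential_standard (P : Exp) (hP : P.fv = ∅) :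
    (∃ v, Exp.IsValue v ∧ EvalS P v) ↔
      ¬ ∃ f : ℕ → Exp, f 0 = P ∧ ∀ n, CallS (f n) (f (n + 1)) := by
  constructor
  · rintro ⟨v, -, hv⟩ ⟨f, hf0, hf⟩
    exact acc_no_chain (evalS_acc hv) f hf0 hf
  · intro h
    by_contra hne
    have hne' : ¬ ∃ v, EvalS P v := fun ⟨v, hv⟩ => hne ⟨v, evalS_isValue hv, hv⟩
    apply h
    have key : ∀ p : {e : Exp // e.fv = ∅ ∧ ¬ ∃ v, EvalS e v},
        ∃ q : {e : Exp // e.fv = ∅ ∧ ¬ ∃ v, EvalS e v}, CallS p.1 q.1 := by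
      rintro ⟨e, h1, h2⟩
      obtain ⟨e', hc, hc1, hc2⟩ := progress h1 h2
      exact ⟨⟨e', hc1, hc2⟩, hc⟩
    choose g hg using key
    let F : ℕ → {e : Exp // e.fv = ∅ ∧ ¬ ∃ v, EvalS e v} := fun n =>
      Nat.rec ⟨P, hP, hne'⟩ (fun _ p => g p) n
    exact ⟨fun n => (F n).1, rfl, fun n => hg (F n)⟩
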